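/- Let n ≥ 1, let F be a cdf which is continuous on ℝ, let G_1,…,G_m be cdfs, and let 𝒰, ϑ : [0,1]^m → ℝ and μ_j, ℓ_j, m_j, ν_j : [0,1]^m → EReal (j = 1,…,n) be functions, continuous on [0,1]^m, such that: (d1) 𝒰 and ϑ are non-negative; (d2) 𝒰, each μ_j and each m_j are non-decreasing in each variable, and ϑ, each ν_j and each ℓ_j are non-increasing in each variable; (d3) if 𝒰(0,…,0) ≠ ϑ(0,…,0), then (𝒰(0,…,0) = 0 or μ_j(0,…,0) = ℓ_j(0,…,0) for all j) and (ϑ(0,…,0) = 0 or m_j(0,…,0) = ν_j(0,…,0) for all j); (d4) if 𝒰(0,…,0) = ϑ(0,…,0) ≠ 0, then μ_j(0,…,0) = ν_j(0,…,0) and m_j(0,…,0) = ℓ_j(0,…,0) for all j; (d5) ℓ_j(0,…,0) ≤ μ_j(0,…,0) for all j, and if ϑ(0,…,0) ≠ 0 then m_j(1,…,1) ≤ ν_j(1,…,1) for all j; (d6) μ_n(1,…,1) ≥ sup{x ∈ ℝ : F(x) < 1} and ℓ_1(1,…,1) ≤ inf{x ∈ ℝ : F(x) > 0}; (d7) 𝒰(1,…,1)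 = 1; (d8) ϑ(1,…,1) = 0 or ν_j(1,…,1) = m_j(1,…,1) for all j; (d9) μ_j(1,…,1) = ℓ_{j+1}(1,…,1) for all j = 1,…,n−1. Then, writing (·)(x) = (G_1(x),…,G_m(x)), the function H(x) = 𝒰(·)(x)·Σ_{j=1}^n (F̄(μ_j(·)(x)) − F̄(ℓ_j(·)(x))) − ϑ(·)(x)·Σ_{j=1}^n (F̄(ν_j(·)(x)) − F̄(m_j(·)(x))) is a cdf. -/

import Mathlib

open Filter Topology Set BigOperators unitInterval

/-- A cumulative distribution function: non-decreasing, right-continuous,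
tending to 0 at `-∞` and to 1 at `+∞`. -/
def IsCDF (F : ℝ → ℝ) : Prop :=
  Monotone F ∧ (∀ x : ℝ, ContinuousWithinAt F (Set.Ici x) x) ∧
    Tendsto F atBot (nhds 0) ∧ Tendsto F atTop (nhds 1)

/-- The extension of a cdf to the extended reals, with value 0 at `⊥` and 1 at `⊤`. -/
noncomputable def extCDF (F : ℝ → ℝ) (a : EReal) : ℝ :=
  if a = ⊥ then 0 else if a = ⊤ then 1 else F a.toReal


lemma cdf_le_one {F : ℝ → ℝ} (hF : IsCDF F) (x : ℝ) : F x ≤ 1 :=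
  ge_of_tendsto hF.2.2.2 (eventually_atTop.2 ⟨x, fun _ hy => hF.1 hy⟩)

lemma cdf_nonneg {F : ℝ → ℝ} (hF : IsCDF F) (x : ℝ) : 0 ≤ F x :=
  le_of_tendsto hF.2.2.1 (eventually_atBot.2 ⟨x, fun _ hy => hF.1 hy⟩)

lemma extCDF_bot {F : ℝ → ℝ} : extCDF F ⊥ = 0 := by simp [extCDF]

lemma extCDF_top {F : ℝ → ℝ} : extCDF F ⊤ = 1 := by simp [extCDF]

lemma extCDF_coe {F : ℝ → ℝ} (x : ℝ) : extCDF F (x : EReal) = F x := by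
  simp [extCDF]

lemma extCDF_mono {F : ℝ → ℝ} (hF : IsCDF F) : Monotone (extCDF F) := by
  intro a b hab
  induction a using EReal.rec with
  | bot =>
    rw [extCDF_bot]
    induction b using EReal.rec with
    | bot => rw [extCDF_bot]
    | coe y => rw [extCDF_coe]; exact cdf_nonneg hF y
    | top => rw [extCDF_top]; exact zero_le_one
  | coe x =>
    induction b using EReal.rec with
    | bot => exact absurd hab (by simp)
    | coe y => rw [extCDF_coe, extCDF_coe]; exact hF.1 (EReal.coe_le_coe_iff.1 hab)
    | top => rw [extCDF_coe, extCDF_top]; exact cdf_le_one hF x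
  | top =>
    have : b = ⊤ := top_le_iff.1 hab
    rw [this]

lemma extCDF_continuous {F : ℝ → ℝ} (hF : IsCDF F) (hFc : Continuous F) :
    Continuous (extCDF F) := by
  rw [continuous_iff_continuousAt]
  intro a
  induction a using EReal.rec with
  | bot =>
    rw [ContinuousAt, extCDF_bot, Metric.tendsto_nhds]
    intro ε hε
    obtain ⟨c, hc⟩ := eventually_atBot.1 (Metric.tendsto_nhds.1 hF.2.2.1 ε hε)
    filter_upwards [Iio_mem_nhds (EReal.bot_lt_coe c)] with x hx
    induction x using EReal.rec with
    | bot => simpa [extCDF_bot] using hε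
    | coe y => rw [extCDF_coe]; exact hc y (le_of_lt (EReal.coe_lt_coe_iff.1 hx))
    | top => exact absurd hx (by simp)
  | top =>
    rw [ContinuousAt, extCDF_top, Metric.tendsto_nhds]
    intro ε hε
    obtain ⟨c, hc⟩ := eventually_atTop.1 (Metric.tendsto_nhds.1 hF.2.2.2 ε hε)
    filter_upwards [Ioi_mem_nhds (EReal.coe_lt_top c)] with x hx
    induction x using EReal.rec with
    | bot => exact absurd hx (by simp)
    | coe y => rw [extCDF_coe]; exact hc y (le_of_lt (EReal.coe_lt_coe_iff.1 hx))
    | top => simpa [extCDF_top] using hε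
  | coe t =>
    have h1 : ContinuousAt (fun a : EReal => F a.toReal) (t : EReal) :=
      hFc.continuousAt.comp (EReal.tendsto_toReal (by simp) (by simp))
    apply h1.congr
    filter_upwards [Ioo_mem_nhds (EReal.bot_lt_coe t) (EReal.coe_lt_top t)] with x hx
    simp [extCDF, hx.1.ne', hx.2.ne]

lemma extCDF_sSup_eq_one {F : ℝ → ℝ} (hF : IsCDF F) (hFc : Continuous F) {e : EReal}
    (he : sSup ((fun x : ℝ => (x : EReal)) '' {x | F x < 1}) ≤ e) : extCDF F e = 1 := by
  induction e using EReal.rec with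
  | top => exact extCDF_top
  | bot =>
    exfalso
    obtain ⟨x, hx⟩ : ∃ x, F x < 1 := (hF.2.2.1.eventually_lt_const zero_lt_one).exists
    have hle : (x : EReal) ≤ ⊥ := le_trans (le_sSup (Set.mem_image_of_mem _ (show x ∈ {x | F x < 1} from hx))) he
    exact (EReal.coe_ne_bot x) (le_bot_iff.1 hle)
  | coe t =>
    rw [extCDF_coe]
    have key : ∀ u, t < u → F u = 1 := by
      intro u hu
      by_contra hne
      have hu1 : F u < 1 := lt_of_le_of_ne (cdf_le_one hF u) hne
      have : (u : EReal) ≤ (t : EReal) := le_trans (le_sSup (Set.mem_image_of_mem _ (show u ∈ {x | F x < 1} from hu1))) he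
      exact absurd (EReal.coe_le_coe_iff.1 this) (not_le.2 hu)
    have h1 : Tendsto F (𝓝[>] t) (𝓝 (F t)) := (hFc.tendsto t).mono_left nhdsWithin_le_nhds
    have h2 : Tendsto F (𝓝[>] t) (𝓝 1) :=
      tendsto_const_nhds.congr' (eventually_mem_nhdsWithin.mono fun u hu => (key u hu).symm)
    exact tendsto_nhds_unique h1 h2

lemma extCDF_sInf_eq_zero {F : ℝ → ℝ} (hF : IsCDF F) (hFc : Continuous F) {e : EReal}
    (he : e ≤ sInf ((fun x : ℝ => (x : EReal)) '' {x | 0 < F x})) : extCDF F e = 0 := by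
  induction e using EReal.rec with
  | bot => exact extCDF_bot
  | top =>
    exfalso
    obtain ⟨x, hx⟩ : ∃ x, 0 < F x := (hF.2.2.2.eventually_const_lt zero_lt_one).exists
    have hle : (⊤ : EReal) ≤ (x : EReal) := le_trans he (sInf_le (Set.mem_image_of_mem _ (show x ∈ {x | 0 < F x} from hx)))
    exact (EReal.coe_ne_top x) (top_le_iff.1 hle)
  | coe t =>
    rw [extCDF_coe]
    have key : ∀ u, u < t → F u = 0 := by
      intro u hu
      by_contra hne
      have hu1 : 0 < F u := lt_of_le_of_ne (cdf_nonneg hF u) (Ne.symm hne)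
      have : (t : EReal) ≤ (u : EReal) := le_trans he (sInf_le (Set.mem_image_of_mem _ (show u ∈ {x | 0 < F x} from hu1)))
      exact absurd (EReal.coe_le_coe_iff.1 this) (not_le.2 hu)
    have h1 : Tendsto F (𝓝[<] t) (𝓝 (F t)) := (hFc.tendsto t).mono_left nhdsWithin_le_nhds
    have h2 : Tendsto F (𝓝[<] t) (𝓝 0) :=
      tendsto_const_nhds.congr' (eventually_mem_nhdsWithin.mono fun u hu => (key u hu).symm)
    exact tendsto_nhds_unique h1 h2

lemma telescope_sum {n : ℕ} (hn : 0 < n) (A B : Fin n → ℝ)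
    (h : ∀ j : Fin n, ∀ hj : (j : ℕ) + 1 < n, A j = B ⟨(j : ℕ) + 1, hj⟩) :
    ∑ j, (A j - B j) = A ⟨n - 1, by omega⟩ - B ⟨0, by omega⟩ := by
  classical
  set f : ℕ → ℝ := fun k => if hk : k < n then B ⟨k, hk⟩ else A ⟨n - 1, by omega⟩ with hf
  have key : ∀ j : Fin n, A j - B j = f ((j : ℕ) + 1) - f (j : ℕ) := by
    intro j
    have hBj : f (j : ℕ) = B j := by simp [hf, j.isLt]
    have hAj : f ((j : ℕ) + 1) = A j := by
      by_cases hj : (j : ℕ) + 1 < n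
      · simp only [hf, dif_pos hj]
        exact (h j hj).symm
      · have hj' : (j : ℕ) = n - 1 := by have := j.isLt; omega
        simp only [hf, dif_neg hj]
        congr 1
        exact Fin.ext hj'.symm
    rw [hBj, hAj]
  rw [Finset.sum_congr rfl (fun j _ => key j),
    Fin.sum_univ_eq_sum_range (fun k => f (k + 1) - f k) n,
    Finset.sum_range_sub f n]
  have h1 : f n = A ⟨n - 1, by omega⟩ := by simp [hf]
  have h2 : f 0 = B ⟨0, by omega⟩ := by rw [hf]; exact dif_pos (by omega)
  rw [h1, h2]

/-- Corollary 1.2: the method to generate classes of probability distributions. -/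
theorem stmt_2
    (n m : ℕ) (hn : 1 ≤ n)
    (F : ℝ → ℝ) (hF : IsCDF F) (hFc : Continuous F)
    (G : Fin m → ℝ → ℝ) (hG : ∀ i, IsCDF (G i))
    (hG01 : ∀ i (x : ℝ), G i x ∈ unitInterval)
    (𝒰 ϑ : (Fin m → unitInterval) → ℝ)
    (μ ℓ mm ν : Fin n → (Fin m → unitInterval) → EReal)
    (h𝒰c : Continuous 𝒰) (hϑc : Continuous ϑ)
    (hμc : ∀ j, Continuous (μ j)) (hℓc : ∀ j, Continuous (ℓ j))
    (hmc : ∀ j, Continuous (mm j)) (hνc : ∀ j, Continuous (ν j))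
    (d1U : ∀ t, 0 ≤ 𝒰 t) (d1V : ∀ t, 0 ≤ ϑ t)
    (d2U : Monotone 𝒰) (d2μ : ∀ j, Monotone (μ j)) (d2m : ∀ j, Monotone (mm j))
    (d2ϑ : Antitone ϑ) (d2ν : ∀ j, Antitone (ν j)) (d2ℓ : ∀ j, Antitone (ℓ j))
    (d3 : 𝒰 0 ≠ ϑ 0 →
      (𝒰 0 = 0 ∨ ∀ j, μ j 0 = ℓ j 0) ∧ (ϑ 0 = 0 ∨ ∀ j, mm j 0 = ν j 0))
    (d4 : 𝒰 0 = ϑ 0 → 𝒰 0 ≠ 0 → ∀ j, μ j 0 = ν j 0 ∧ mm j 0 = ℓ j 0)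
    (d5a : ∀ j, ℓ j 0 ≤ μ j 0)
    (d5b : ϑ 0 ≠ 0 → ∀ j, mm j 1 ≤ ν j 1)
    (d6a : sSup ((fun x : ℝ => (x : EReal)) '' {x | F x < 1}) ≤ μ ⟨n - 1, by omega⟩ 1)
    (d6b : ℓ ⟨0, by omega⟩ 1 ≤ sInf ((fun x : ℝ => (x : EReal)) '' {x | 0 < F x}))
    (d7 : 𝒰 1 = 1)
    (d8 : ϑ 1 = 0 ∨ ∀ j, ν j 1 = mm j 1)
    (d9 : ∀ j : Fin n, ∀ h : (j : ℕ) + 1 < n, μ j 1 = ℓ ⟨(j : ℕ) + 1, h⟩ 1) :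
    IsCDF (fun x =>
      𝒰 (fun i => ⟨G i x, hG01 i x⟩) *
          ∑ j, (extCDF F (μ j (fun i => ⟨G i x, hG01 i x⟩))
            - extCDF F (ℓ j (fun i => ⟨G i x, hG01 i x⟩)))
        - ϑ (fun i => ⟨G i x, hG01 i x⟩) *
          ∑ j, (extCDF F (ν j (fun i => ⟨G i x, hG01 i x⟩))
            - extCDF F (mm j (fun i => ⟨G i x, hG01 i x⟩)))) := by
  classical
  set g : ℝ → (Fin m → unitInterval) := fun x i => ⟨G i x, hG01 i x⟩ with hg_def
  set S : (Fin m → unitInterval) → ℝ :=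
    fun t => ∑ j, (extCDF F (μ j t) - extCDF F (ℓ j t)) with hS_def
  set T : (Fin m → unitInterval) → ℝ :=
    fun t => ∑ j, (extCDF F (ν j t) - extCDF F (mm j t)) with hT_def
  set Φ : (Fin m → unitInterval) → ℝ := fun t => 𝒰 t * S t - ϑ t * T t with hΦ_def
  show IsCDF (fun x => Φ (g x))
  have hme : Monotone (extCDF F) := extCDF_mono hF
  have hce : Continuous (extCDF F) := extCDF_continuous hF hFc
  -- monotonicity facts
  have hSm : Monotone S := by
    intro s t hst
    exact Finset.sum_le_sum fun j _ => sub_le_sub (hme (d2μ j hst)) (hme (d2ℓ j hst))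
  have hTa : Antitone T := by
    intro s t hst
    exact Finset.sum_le_sum fun j _ => sub_le_sub (hme (d2ν j hst)) (hme (d2m j hst))
  have hS0 : ∀ t, 0 ≤ S t := by
    intro t
    refine Finset.sum_nonneg fun j _ => sub_nonneg.2 (hme ?_)
    calc ℓ j t ≤ ℓ j 0 := d2ℓ j (fun i => unitInterval.nonneg')
      _ ≤ μ j 0 := d5a j
      _ ≤ μ j t := d2μ j (fun i => unitInterval.nonneg')
  have hΦm : Monotone Φ := by
    intro s t hst
    have hUS : 𝒰 s * S s ≤ 𝒰 t * S t := mul_le_mul (d2U hst) (hSm hst) (hS0 s) (d1U t)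
    have hVT : ϑ t * T t ≤ ϑ s * T s := by
      rcases eq_or_ne (ϑ 0) 0 with h0 | h0
      · have hz : ∀ u, ϑ u = 0 := fun u =>
          le_antisymm (h0 ▸ d2ϑ (fun i => unitInterval.nonneg')) (d1V u)
        rw [hz s, hz t, zero_mul, zero_mul]
      · have hT0 : ∀ u, 0 ≤ T u := by
          intro u
          refine Finset.sum_nonneg fun j _ => sub_nonneg.2 (hme ?_)
          calc mm j u ≤ mm j 1 := d2m j (fun i => unitInterval.le_one')
            _ ≤ ν j 1 := d5b h0 j
            _ ≤ ν j u := d2ν j (fun i => unitInterval.le_one')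
        exact mul_le_mul (d2ϑ hst) (hTa hst) (hT0 t) (d1V s)
    exact sub_le_sub hUS hVT
  have hΦc : Continuous Φ := by
    refine (h𝒰c.mul ?_).sub (hϑc.mul ?_)
    · exact continuous_finset_sum _ fun j _ => (hce.comp (hμc j)).sub (hce.comp (hℓc j))
    · exact continuous_finset_sum _ fun j _ => (hce.comp (hνc j)).sub (hce.comp (hmc j))
  have hgm : Monotone g := fun a b hab i => Subtype.mk_le_mk.2 ((hG i).1 hab)
  -- values at the endpoints
  have hS1 : S 1 = 1 := by
    have ht := telescope_sum hn (fun j => extCDF F (μ j 1)) (fun j => extCDF F (ℓ j 1))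
      (fun j hj => by rw [d9 j hj])
    rw [hS_def]
    simp only at ht ⊢
    rw [ht, extCDF_sSup_eq_one hF hFc d6a, extCDF_sInf_eq_zero hF hFc d6b, sub_zero]
  have hΦ1 : Φ 1 = 1 := by
    rcases d8 with h | h
    · rw [hΦ_def]; simp only; rw [h, zero_mul, sub_zero, d7, one_mul, hS1]
    · have hT1 : T 1 = 0 := by
        rw [hT_def]
        exact Finset.sum_eq_zero fun j _ => by rw [h j, sub_self]
      rw [hΦ_def]; simp only; rw [hT1, mul_zero, sub_zero, d7, one_mul, hS1]
  have hΦ0 : Φ 0 = 0 := by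
    rcases eq_or_ne (𝒰 0) (ϑ 0) with he | he
    · rcases eq_or_ne (𝒰 0) 0 with h0 | h0
      · rw [hΦ_def]; simp only; rw [h0, ← he, h0, zero_mul, zero_mul, sub_zero]
      · have h4 := d4 he h0
        have hST : S 0 = T 0 := by
          rw [hS_def, hT_def]
          exact Finset.sum_congr rfl fun j _ => by rw [(h4 j).1, (h4 j).2]
        rw [hΦ_def]; simp only; rw [← he, hST, sub_self]
    · obtain ⟨h1, h2⟩ := d3 he
      have hU : 𝒰 0 * S 0 = 0 := by
        rcases h1 with h | h
        · rw [h, zero_mul]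
        · have : S 0 = 0 := by
            rw [hS_def]; exact Finset.sum_eq_zero fun j _ => by rw [h j, sub_self]
          rw [this, mul_zero]
      have hV : ϑ 0 * T 0 = 0 := by
        rcases h2 with h | h
        · rw [h, zero_mul]
        · have : T 0 = 0 := by
            rw [hT_def]; exact Finset.sum_eq_zero fun j _ => by rw [h j, sub_self]
          rw [this, mul_zero]
      rw [hΦ_def]; simp only; rw [hU, hV, sub_zero]
  refine ⟨hΦm.comp hgm, ?_, ?_, ?_⟩
  · intro x
    have hgw : ContinuousWithinAt g (Ici x) x := by
      apply continuousWithinAt_pi.2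
      intro i
      exact tendsto_subtype_rng.2 ((hG i).2.1 x)
    exact hΦc.continuousAt.comp_continuousWithinAt hgw
  · have hg0 : Tendsto g atBot (𝓝 0) := by
      rw [tendsto_pi_nhds]
      intro i
      rw [tendsto_subtype_rng]
      exact (hG i).2.2.1
    have := (hΦc.tendsto 0).comp hg0
    rwa [hΦ0] at this
  · have hg1 : Tendsto g atTop (𝓝 1) := by
      rw [tendsto_pi_nhds]
      intro i
      rw [tendsto_subtype_rng]
      exact (hG i).2.2.2
    have := (hΦc.tendsto 1).comp hg1
    rwa [hΦ1] at this
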